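/- Let v_m be the probability that a mod-m random walk started at 1 reaches m before reaching 0, and let v̄_m be the probability that the walk started at m−1 reaches 0 before reaching m. Then v_m / v̄_m = (p_1 p_2 ⋯ p_{m−1})/(q_1 q_2 ⋯ q_{m−1}). -/

import Mathlib

lemma walk_diff (m : ℕ) (p q : ℤ → ℝ)
    (hp : ∀ j, 0 < p j) (hpq : ∀ j, p j + q j = 1)
    (x : ℤ → ℝ)
    (hxrec : ∀ j : ℤ, 0 < j → j < m → x j = p j * x (j + 1) + q j * x (j - 1)) :
    ∀ k : ℕ, k < m → x ((k:ℤ)+1) - x k = (∏ j ∈ Finset.Icc 1 k, q (j:ℤ) / p (j:ℤ)) * (x 1 - x 0) := by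
  intro k
  induction k with
  | zero => intro _; simp
  | succ k ih =>
    intro hk
    have ih' := ih (by omega)
    have hrec := hxrec ((k:ℤ)+1) (by positivity) (by exact_mod_cast hk)
    have hs : ((k:ℤ)+1-1) = (k:ℤ) := by ring
    rw [hs] at hrec
    have hpk := hp ((k:ℤ)+1)
    have key : x ((k:ℤ)+1+1) - x ((k:ℤ)+1) = q ((k:ℤ)+1) / p ((k:ℤ)+1) * (x ((k:ℤ)+1) - x k) := by
      rw [div_mul_eq_mul_div, eq_div_iff (ne_of_gt hpk)]
      linear_combination -hrec - x ((k:ℤ)+1) * hpq ((k:ℤ)+1)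
    rw [Finset.prod_Icc_succ_top (by omega)]
    push_cast
    push_cast at key ih'
    rw [key, ih']
    ring

theorem stmt_5 (m : ℕ) (hm : 2 ≤ m) (p q : ℤ → ℝ)
    (hp : ∀ j, 0 < p j) (hq : ∀ j, 0 < q j) (hpq : ∀ j, p j + q j = 1)
    (hpper : ∀ j, p (j + m) = p j) (hqper : ∀ j, q (j + m) = q j)
    (u : ℤ → ℝ) (hu0 : u 0 = 0) (hum : u m = 1)
    (hurec : ∀ j : ℤ, 0 < j → j < m → u j = p j * u (j + 1) + q j * u (j - 1))
    (w : ℤ → ℝ) (hw0 : w 0 = 1) (hwm : w m = 0)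
    (hwrec : ∀ j : ℤ, 0 < j → j < m → w j = p j * w (j + 1) + q j * w (j - 1)) :
    u 1 / w ((m : ℤ) - 1) =
      (∏ j ∈ Finset.Icc 1 (m - 1), p j) / (∏ j ∈ Finset.Icc 1 (m - 1), q j) := by
  set R : ℕ → ℝ := fun k => ∏ j ∈ Finset.Icc 1 k, q (j:ℤ) / p (j:ℤ) with hR
  set S : ℝ := ∑ k ∈ Finset.range m, R k with hS
  have hRpos : ∀ k, 0 < R k := fun k =>
    Finset.prod_pos (fun j _ => div_pos (hq j) (hp j))
  have hSpos : 0 < S := Finset.sum_pos (fun k _ => hRpos k) ⟨0, by simp; omega⟩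
  have hud := walk_diff m p q hp hpq u hurec
  have hwd := walk_diff m p q hp hpq w hwrec
  have telu : ∑ k ∈ Finset.range m, (u ((k:ℤ)+1) - u (k:ℤ)) = u m - u 0 := by
    have h := Finset.sum_range_sub (fun k : ℕ => u (k:ℤ)) m
    push_cast at h; exact h
  have telw : ∑ k ∈ Finset.range m, (w ((k:ℤ)+1) - w (k:ℤ)) = w m - w 0 := by
    have h := Finset.sum_range_sub (fun k : ℕ => w (k:ℤ)) m
    push_cast at h; exact h
  have hu1 : S * u 1 = 1 := by
    have h : ∑ k ∈ Finset.range m, (u ((k:ℤ)+1) - u (k:ℤ)) = S * u 1 := by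
      rw [hS, Finset.sum_mul]
      refine Finset.sum_congr rfl fun k hk => ?_
      rw [hud k (Finset.mem_range.mp hk), hu0]; ring
    rw [telu, hum, hu0] at h
    linarith
  have hw1 : S * (w 1 - 1) = -1 := by
    have h : ∑ k ∈ Finset.range m, (w ((k:ℤ)+1) - w (k:ℤ)) = S * (w 1 - 1) := by
      rw [hS, Finset.sum_mul]
      refine Finset.sum_congr rfl fun k hk => ?_
      rw [hwd k (Finset.mem_range.mp hk), hw0]
    rw [telw, hwm, hw0] at h
    linarith
  have hwm1 : w ((m:ℤ) - 1) * S = R (m-1) := by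
    have h := hwd (m-1) (by omega)
    have h1 : ((m-1 : ℕ) : ℤ) = (m:ℤ) - 1 := by omega
    rw [h1] at h
    have h2 : ((m:ℤ) - 1 + 1) = (m:ℤ) := by ring
    rw [h2, hwm, hw0] at h
    rw [hR]
    linear_combination (-S) * h - (R (m-1)) * hw1
  have hu1' : u 1 = 1 / S := by
    rw [eq_div_iff (ne_of_gt hSpos)]; linarith [hu1]
  have hwm1' : w ((m:ℤ) - 1) = R (m-1) / S := by
    rw [eq_div_iff (ne_of_gt hSpos)]; exact hwm1
  rw [hu1', hwm1']
  have hRdiv : R (m-1) = (∏ j ∈ Finset.Icc 1 (m-1), q (j:ℤ)) / (∏ j ∈ Finset.Icc 1 (m-1), p (j:ℤ)) := by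
    rw [hR]; exact Finset.prod_div_distrib (fun j : ℕ => q (j:ℤ)) (fun j : ℕ => p (j:ℤ))
  rw [hRdiv]
  have hPpos : 0 < ∏ j ∈ Finset.Icc 1 (m-1), p (j:ℤ) :=
    Finset.prod_pos fun j _ => hp j
  have hQpos : 0 < ∏ j ∈ Finset.Icc 1 (m-1), q (j:ℤ) :=
    Finset.prod_pos fun j _ => hq j
  field_simp
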